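/- Let k ≥ 1 and let Q = {q_1,…,q_k} ⊂ ℝ^d be a set of k centers achieving the optimal k-clustering cost, i.e., c(P,Q) = opt(P,k), and let {P_1,…,P_k} be the induced partition of P (each p ∈ P_i has q_i among its closest centers in Q). If opt(P,k) − opt(P,2k) ≤ ε' for some ε' > 0, then for every i ∈ {1,…,k} with P_i nonempty, opt(P_i,1) − opt(P_i,2) ≤ ε'. (Lemma 1) -/

import Mathlib

open scoped Classical

/-- Points of `ℝ^d` with the Euclidean norm. -/
abbrev Pt (d : ℕ) := EuclideanSpace ℝ (Fin d)

/-- Weighted clustering cost `c(P,Q) = Σ_{p∈P} w_p · (min_{q∈Q} ‖p−q‖)^z`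
(the minimum is expressed as an infimum, which agrees with the minimum
for nonempty finite `Q`). -/
noncomputable def cCost {d : ℕ} (z : ℝ) (w : Pt d → ℝ) (P Q : Finset (Pt d)) : ℝ :=
  ∑ p ∈ P, w p * (sInf ((fun q => dist p q) '' (Q : Set (Pt d)))) ^ z

/-- Optimal `k`-clustering cost `opt(P,k) = inf { c(P,Q) : |Q| = k }`. -/
noncomputable def optCost {d : ℕ} (z : ℝ) (w : Pt d → ℝ) (P : Finset (Pt d)) (k : ℕ) : ℝ :=
  sInf { r : ℝ | ∃ Q : Finset (Pt d), Q.card = k ∧ r = cCost z w P Q }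

/-- Lemma 1: if `Q` (with `|Q| = k`) attains `opt(P,k)` and `f` assigns each point of `P`
a closest center in `Q`, then `opt(P,k) − opt(P,2k) ≤ ε'` implies that every nonempty
induced cluster `P_q = {p ∈ P : f p = q}` satisfies `opt(P_q,1) − opt(P_q,2) ≤ ε'`. -/

lemma dQ_nonneg {d : ℕ} (p : Pt d) (Q : Finset (Pt d)) :
    0 ≤ sInf ((fun q => dist p q) '' (Q : Set (Pt d))) := by
  apply Real.sInf_nonneg
  rintro r ⟨q, _, rfl⟩
  exact dist_nonneg

lemma dQ_bdd {d : ℕ} (p : Pt d) (Q : Finset (Pt d)) :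
    BddBelow ((fun q => dist p q) '' (Q : Set (Pt d))) :=
  (Q.finite_toSet.image _).bddBelow

lemma dQ_le {d : ℕ} (p : Pt d) {Q : Finset (Pt d)} {q : Pt d} (hq : q ∈ Q) :
    sInf ((fun q => dist p q) '' (Q : Set (Pt d))) ≤ dist p q :=
  csInf_le (dQ_bdd p Q) ⟨q, by simpa using hq, rfl⟩

lemma dQ_anti {d : ℕ} (p : Pt d) {Q Q' : Finset (Pt d)} (hQ : Q.Nonempty) (h : Q ⊆ Q') :
    sInf ((fun q => dist p q) '' (Q' : Set (Pt d)))
      ≤ sInf ((fun q => dist p q) '' (Q : Set (Pt d))) := by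
  apply csInf_le_csInf (dQ_bdd p Q')
  · obtain ⟨q, hq⟩ := hQ
    exact ⟨dist p q, ⟨q, by simpa using hq, rfl⟩⟩
  · exact Set.image_mono (by exact_mod_cast h)

lemma cCost_nonneg {d : ℕ} (z : ℝ) (w : Pt d → ℝ) (P Q : Finset (Pt d))
    (hw : ∀ p ∈ P, 0 ≤ w p) : 0 ≤ cCost z w P Q := by
  apply Finset.sum_nonneg
  intro p hp
  exact mul_nonneg (hw p hp) (Real.rpow_nonneg (dQ_nonneg p Q) z)

lemma optCost_le {d : ℕ} (z : ℝ) (w : Pt d → ℝ) (P Q : Finset (Pt d)) {n : ℕ}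
    (hw : ∀ p ∈ P, 0 ≤ w p) (hcard : Q.card = n) :
    optCost z w P n ≤ cCost z w P Q := by
  apply csInf_le
  · exact ⟨0, by rintro r ⟨Q', _, rfl⟩; exact cCost_nonneg z w P Q' hw⟩
  · exact ⟨Q, hcard, rfl⟩

lemma cCost_anti {d : ℕ} (z : ℝ) (hz : 0 ≤ z) (w : Pt d → ℝ) (P : Finset (Pt d))
    {Q Q' : Finset (Pt d)} (hw : ∀ p ∈ P, 0 ≤ w p) (hQ : Q.Nonempty) (h : Q ⊆ Q') :
    cCost z w P Q' ≤ cCost z w P Q := by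
  apply Finset.sum_le_sum
  intro p hp
  apply mul_le_mul_of_nonneg_left _ (hw p hp)
  exact Real.rpow_le_rpow (dQ_nonneg p Q') (dQ_anti p hQ h) hz

theorem lemma1 {d : ℕ} (z : ℝ) (hz : 0 < z)
    (P : Finset (Pt d)) (hP : P.Nonempty)
    (w : Pt d → ℝ) (hw : ∀ p ∈ P, 0 < w p)
    (k : ℕ) (hk : 1 ≤ k)
    (Q : Finset (Pt d)) (hQcard : Q.card = k)
    (hQopt : cCost z w P Q = optCost z w P k)
    (f : Pt d → Pt d)
    (hfQ : ∀ p ∈ P, f p ∈ Q)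
    (hfmin : ∀ p ∈ P, dist p (f p) = sInf ((fun q => dist p q) '' (Q : Set (Pt d))))
    (ε' : ℝ) (hε' : 0 < ε')
    (hgap : optCost z w P k - optCost z w P (2 * k) ≤ ε') :
    ∀ q ∈ Q, (P.filter fun p => f p = q).Nonempty →
      optCost z w (P.filter fun p => f p = q) 1
        - optCost z w (P.filter fun p => f p = q) 2 ≤ ε' := by
  intro q hq hA
  set A := P.filter fun p => f p = q with hAdef
  set B := P.filter fun p => ¬ f p = q with hBdef
  have hwP : ∀ p ∈ P, 0 ≤ w p := fun p hp => (hw p hp).le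
  have hwA : ∀ p ∈ A, 0 ≤ w p := fun p hp => (hw p (Finset.mem_filter.1 hp).1).le
  -- cost of P w.r.t. Q splits as cost of A w.r.t. {q} plus B-part
  have hPQ : cCost z w P Q = ∑ p ∈ P, w p * (dist p (f p)) ^ z :=
    Finset.sum_congr rfl fun p hp => by rw [hfmin p hp]
  have hAq : cCost z w A {q} = ∑ p ∈ A, w p * (dist p (f p)) ^ z := by
    apply Finset.sum_congr rfl
    intro p hp
    have hpq : f p = q := (Finset.mem_filter.1 hp).2
    rw [Finset.coe_singleton, Set.image_singleton, csInf_singleton, hpq]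
  have hBnn : 0 ≤ ∑ p ∈ B, w p * (dist p (f p)) ^ z := by
    apply Finset.sum_nonneg
    intro p hp
    exact mul_nonneg (hwP p (Finset.mem_filter.1 hp).1) (Real.rpow_nonneg dist_nonneg z)
  have hsplit : cCost z w P Q
      = cCost z w A {q} + ∑ p ∈ B, w p * (dist p (f p)) ^ z := by
    rw [hPQ, hAq, Finset.sum_filter_add_sum_filter_not P (fun p => f p = q)]
  have hopt1 : optCost z w A 1 ≤ cCost z w A {q} :=
    optCost_le z w A {q} hwA (Finset.card_singleton q)
  by_cases hnt : ∃ x y : Pt d, x ≠ y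
  · -- nontrivial case
    obtain ⟨x, y, hxy⟩ := hnt
    have hv : y - x ≠ 0 := sub_ne_zero.2 hxy.symm
    haveI : Infinite (Pt d) :=
      Infinite.of_injective (fun t : ℝ => t • (y - x) + x)
        (fun a b h => smul_left_injective ℝ hv (by simpa using h))
    have hkey : optCost z w A 1 - ε' ≤ optCost z w A 2 := by
      apply le_csInf
      · exact ⟨cCost z w A {x, y}, {x, y}, Finset.card_pair hxy, rfl⟩
      rintro r ⟨Q₂, hQ₂card, rfl⟩
      have hQ₂ne : Q₂.Nonempty := Finset.card_pos.1 (by omega)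
      -- build a 2k-center set
      have hBim : B.image f ⊆ Q.erase q := by
        intro r hr
        obtain ⟨p, hp, rfl⟩ := Finset.mem_image.1 hr
        have hp' := Finset.mem_filter.1 hp
        exact Finset.mem_erase.2 ⟨hp'.2, hfQ p hp'.1⟩
      have hcardB : (B.image f ∪ Q₂).card ≤ 2 * k := by
        have h1 := Finset.card_union_le (B.image f) Q₂
        have h2 := Finset.card_le_card hBim
        have h3 : (Q.erase q).card = k - 1 := by
          rw [Finset.card_erase_of_mem hq, hQcard]
        omega
      obtain ⟨Q'', hsub, hQ''card⟩ :=
        Infinite.exists_superset_card_eq (B.image f ∪ Q₂) (2 * k) hcardB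
      have hB'ne : (B.image f ∪ Q₂).Nonempty :=
        hQ₂ne.mono Finset.subset_union_right
      -- cost of P w.r.t. the union splits
      have hunion : cCost z w P (B.image f ∪ Q₂)
          ≤ cCost z w A Q₂ + ∑ p ∈ B, w p * (dist p (f p)) ^ z := by
        have hA' : ∑ p ∈ A, w p * (sInf ((fun q' => dist p q') ''
              ((B.image f ∪ Q₂ : Finset (Pt d)) : Set (Pt d)))) ^ z
            ≤ cCost z w A Q₂ := by
          apply Finset.sum_le_sum
          intro p hp
          apply mul_le_mul_of_nonneg_left _ (hwA p hp)
          exact Real.rpow_le_rpow (dQ_nonneg p _)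
            (dQ_anti p hQ₂ne Finset.subset_union_right) hz.le
        have hB' : ∑ p ∈ B, w p * (sInf ((fun q' => dist p q') ''
              ((B.image f ∪ Q₂ : Finset (Pt d)) : Set (Pt d)))) ^ z
            ≤ ∑ p ∈ B, w p * (dist p (f p)) ^ z := by
          apply Finset.sum_le_sum
          intro p hp
          have hp' := Finset.mem_filter.1 hp
          apply mul_le_mul_of_nonneg_left _ (hwP p hp'.1)
          apply Real.rpow_le_rpow (dQ_nonneg p _) _ hz.le
          exact dQ_le p (Finset.mem_union_left _ (Finset.mem_image_of_mem f hp))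
        calc cCost z w P (B.image f ∪ Q₂)
            = (∑ p ∈ A, w p * (sInf ((fun q' => dist p q') ''
                ((B.image f ∪ Q₂ : Finset (Pt d)) : Set (Pt d)))) ^ z)
              + ∑ p ∈ B, w p * (sInf ((fun q' => dist p q') ''
                ((B.image f ∪ Q₂ : Finset (Pt d)) : Set (Pt d)))) ^ z := by
              rw [cCost, ← Finset.sum_filter_add_sum_filter_not P (fun p => f p = q)]
          _ ≤ _ := add_le_add hA' hB'
      have h2k : optCost z w P (2 * k) ≤ cCost z w P (B.image f ∪ Q₂) :=
        le_trans (optCost_le z w P Q'' hwP hQ''card)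
          (cCost_anti z hz.le w P hwP hB'ne hsub)
      linarith [hQopt, hgap]
    linarith
  · -- subsingleton case: no finset of card ≥ 2 exists
    push_neg at hnt
    have hcard1 : ∀ S : Finset (Pt d), S.card ≤ 1 :=
      fun S => Finset.card_le_one.2 fun a _ b _ => hnt a b
    have hempty : ∀ n : ℕ, 2 ≤ n →
        { r : ℝ | ∃ Q' : Finset (Pt d), Q'.card = n ∧ r = cCost z w A Q' } = ∅ ∧
        { r : ℝ | ∃ Q' : Finset (Pt d), Q'.card = n ∧ r = cCost z w P Q' } = ∅ := by
      intro n hn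
      constructor <;>
      · ext r
        simp only [Set.mem_setOf_eq, Set.mem_empty_iff_false, iff_false, not_exists]
        rintro Q' ⟨hc, -⟩
        have := hcard1 Q'
        omega
    have hA2 : optCost z w A 2 = 0 := by
      rw [optCost, (hempty 2 le_rfl).1, Real.sInf_empty]
    have hP2k : optCost z w P (2 * k) = 0 := by
      rw [optCost, (hempty (2 * k) (by omega)).2, Real.sInf_empty]
    rw [hP2k] at hgap
    rw [hA2]
    linarith
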